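/- Let (Z,d,μ) be a Q-Ahlfors regular metric measure space, let 0 < s ≤ 1 and p > Q/s, and let f ∈ L¹_loc(Z,μ) admit a Hajłasz s-gradient g ∈ L^p(μ). Then there exist a constant C > 0, depending only on Q, s, p and the Ahlfors regularity constants, and a continuous function f̃ : Z → ℂ with f̃ = f μ-almost everywhere and |f̃(ξ) − f̃(η)| ≤ C d(ξ,η)^{s−Q/p} ‖g‖_{L^p(μ)} for all ξ,η ∈ Z. In particular, for this representative every point of Z is a generalized Lebesgue point, i.e. lim_{r→0} (1/μ(B(ξ,r))) ∫_{B(ξ,r)} |f̃ − f̃(ξ)| dμ = 0 for all ξ ∈ Z. (Remark 3.2: for p > Q/s the exceptional set Z ∖ Λ_f is empty.) -/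

import Mathlib

open MeasureTheory Metric Filter Set
open scoped Classical ENNReal

noncomputable section

variable {Z : Type*} [MetricSpace Z] [MeasurableSpace Z] [BorelSpace Z]

/-- A metric measure space: every ball has positive and finite measure. -/
def IsMetricMeasure (m : Measure Z) : Prop :=
  ∀ (ξ : Z) (r : ℝ), 0 < r → 0 < m (ball ξ r) ∧ m (ball ξ r) < ⊤

/-- `m` is `Q`-Ahlfors regular on the set `S` with constant `C ≥ 1`:
`C⁻¹ r^Q ≤ m (B(ξ,r)) ≤ C r^Q` for `ξ ∈ S` and `0 < r < diam S`. -/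
def IsAhlforsOn (m : Measure Z) (S : Set Z) (Q C : ℝ) : Prop :=
  1 ≤ C ∧ ∀ ξ ∈ S, ∀ r : ℝ, 0 < r → ENNReal.ofReal r < EMetric.diam S →
    ENNReal.ofReal (C⁻¹ * r ^ Q) ≤ m (ball ξ r) ∧ m (ball ξ r) ≤ ENNReal.ofReal (C * r ^ Q)

/-- `F` is a porous subset of `Z`: there is `c ∈ (0,1)` such that every ball of radius
`r < diam Z` meeting `F` contains a ball of radius `c·r` disjoint from `F`. -/
def IsPorous (F : Set Z) : Prop :=
  ∃ c : ℝ, 0 < c ∧ c < 1 ∧ ∀ (ξ : Z) (r : ℝ), 0 < r →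
    ENNReal.ofReal r < EMetric.diam (Set.univ : Set Z) → (ball ξ r ∩ F).Nonempty →
      ∃ η : Z, ball η (c * r) ⊆ ball ξ r \ F

/-- `(g k)_{k ∈ ℤ}` is a fractional `s`-gradient of `f` on the set `F`:
each `g k` is nonnegative and measurable, and
`|f ξ - f η| ≤ d(ξ,η)^s (g k ξ + g k η)` whenever `ξ, η ∈ F` and
`2^(-k-1) ≤ d(ξ,η) < 2^(-k)`. -/
def IsFracGradOn (F : Set Z) (s : ℝ) (f : Z → ℂ) (g : ℤ → Z → ℝ) : Prop :=
  (∀ k : ℤ, Measurable (g k)) ∧ (∀ (k : ℤ) (x : Z), 0 ≤ g k x) ∧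
  ∀ k : ℤ, ∀ ξ ∈ F, ∀ η ∈ F,
    (2 : ℝ) ^ (-k - 1) ≤ dist ξ η → dist ξ η < (2 : ℝ) ^ (-k) →
    ‖f ξ - f η‖ ≤ dist ξ η ^ s * (g k ξ + g k η)

/-- `g` is a Hajłasz `s`-gradient of `f` on `Z`. -/
def IsHajlaszGrad (s : ℝ) (f : Z → ℂ) (g : Z → ℝ) : Prop :=
  Measurable g ∧ (∀ x : Z, 0 ≤ g x) ∧
  ∀ ξ η : Z, ‖f ξ - f η‖ ≤ dist ξ η ^ s * (g ξ + g η)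

/-- The `L^p` norm (as an extended real) of a nonnegative function `g`. -/
def lpNorm (m : Measure Z) (p : ℝ) (g : Z → ℝ) : ℝ≥0∞ :=
  (∫⁻ x, ENNReal.ofReal (g x) ^ p ∂m) ^ (1 / p)

/-- The `L^p` norm (as an extended real) of a complex-valued function `f`. -/
def lpNormC (m : Measure Z) (p : ℝ) (f : Z → ℂ) : ℝ≥0∞ :=
  (∫⁻ x, (‖f x‖₊ : ℝ≥0∞) ^ p ∂m) ^ (1 / p)

/-- The `ℓ^q(ℤ; L^p(m))` norm of a sequence of nonnegative functions, i.e. the Besov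
seminorm `(Σ_k ‖g k‖_{L^p}^q)^(1/q)` (supremum over `k` when `q = ∞`). -/
def besovNorm (m : Measure Z) (p : ℝ) (q : ℝ≥0∞) (g : ℤ → Z → ℝ) : ℝ≥0∞ :=
  if q = ⊤ then ⨆ k : ℤ, lpNorm m p (g k)
  else (∑' k : ℤ, lpNorm m p (g k) ^ q.toReal) ^ (1 / q.toReal)

/-- The `L^p(m; ℓ^q(ℤ))` norm of a sequence of nonnegative functions, i.e. the
Triebel–Lizorkin seminorm `‖(Σ_k (g k)^q)^(1/q)‖_{L^p}` (pointwise supremum over `k`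
when `q = ∞`). -/
def tlNorm (m : Measure Z) (p : ℝ) (q : ℝ≥0∞) (g : ℤ → Z → ℝ) : ℝ≥0∞ :=
  (∫⁻ x, (if q = ⊤ then ⨆ k : ℤ, ENNReal.ofReal (g k x)
      else (∑' k : ℤ, ENNReal.ofReal (g k x) ^ q.toReal) ^ (1 / q.toReal)) ^ p ∂m) ^ (1 / p)

/-- `c` is the limit of the averages of `f` over the balls `B(ξ,r)` as `r → 0⁺`. -/
def TraceAt (m : Measure Z) (f : Z → ℂ) (ξ : Z) (c : ℂ) : Prop :=
  Tendsto (fun r : ℝ => (m (ball ξ r)).toReal⁻¹ • ∫ x in ball ξ r, f x ∂m)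
    (nhdsWithin 0 (Ioi 0)) (nhds c)

private lemma pow_rpow_comm {x : ℝ} (hx : 0 ≤ x) (t : ℝ) (n : ℕ) :
    (x ^ n) ^ t = (x ^ t) ^ n := by
  rw [← Real.rpow_natCast x n, ← Real.rpow_natCast (x ^ t) n, ← Real.rpow_mul hx,
    ← Real.rpow_mul hx, mul_comm]

private lemma rpow_seq_tendsto {ρ t : ℝ} (hρ : 0 < ρ) (ht : 0 < t) :
    Tendsto (fun n : ℕ => (ρ * (1/2 : ℝ) ^ n) ^ t) atTop (nhds 0) := by
  have hq : ((1/2 : ℝ) ^ t) < 1 := Real.rpow_lt_one (by norm_num) (by norm_num) ht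
  have hq0 : (0:ℝ) ≤ (1/2 : ℝ) ^ t := Real.rpow_nonneg (by norm_num) t
  have heq : ∀ n : ℕ, (ρ * (1/2 : ℝ) ^ n) ^ t = ρ ^ t * ((1/2 : ℝ) ^ t) ^ n := by
    intro n
    rw [Real.mul_rpow hρ.le (by positivity), pow_rpow_comm (by norm_num) t n]
  simp only [heq]
  simpa using (tendsto_pow_atTop_nhds_zero_of_lt_one hq0 hq).const_mul (ρ ^ t)

private lemma exists_le_twice_avg {X : Type*} [MeasurableSpace X] {μ : Measure X}
    {h : X → ℝ≥0∞} (hm : Measurable h) {B : Set X}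
    (h0 : μ B ≠ 0) (hfin : μ B ≠ ⊤) {I : ℝ≥0∞} (hIfin : I ≠ ⊤)
    (hle : ∫⁻ x in B, h x ∂μ ≤ I) :
    ∃ x ∈ B, h x ≤ 2 * (μ B)⁻¹ * I := by
  by_contra hcon
  push_neg at hcon
  rcases eq_or_ne I 0 with hI0 | hI0
  · subst hI0
    have hz : ∫⁻ x in B, h x ∂μ = 0 := le_antisymm (by simpa using hle) zero_le
    rw [lintegral_eq_zero_iff hm] at hz
    have hset : (μ.restrict B) {x | ¬ h x = 0} = 0 := hz
    have hBsub : B ⊆ {x | ¬ h x = 0} := by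
      intro x hx
      have := hcon x hx
      simp only [mul_zero] at this
      exact fun h0' => by simp [h0'] at this
    have : (μ.restrict B) B = 0 := measure_mono_null hBsub hset
    rw [Measure.restrict_apply_self] at this
    exact h0 this
  · have h1 : (2 * (μ B)⁻¹ * I) * μ B ≤ ∫⁻ x in B, h x ∂μ := by
      rw [← setLIntegral_const]
      exact setLIntegral_mono hm fun x hx => (hcon x hx).le
    have h2 : (2 * (μ B)⁻¹ * I) * μ B = 2 * I := by
      calc (2 * (μ B)⁻¹ * I) * μ B = 2 * I * ((μ B)⁻¹ * μ B) := by ring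
      _ = 2 * I * 1 := by rw [ENNReal.inv_mul_cancel h0 hfin]
      _ = 2 * I := mul_one _
    rw [h2] at h1
    have h3 : 2 * I ≤ I := le_trans h1 hle
    have h4 : I < 2 * I := by
      rw [two_mul]
      exact ENNReal.lt_add_right hIfin hI0
    exact absurd h3 (not_le.mpr h4)
set_option maxHeartbeats 1000000 in
/-- **Remark 3.2.** For `p > Q/s`, every `f ∈ Ṁ^{s,p}(Z)` has a continuous
(`(s-Q/p)`-Hölder) representative, and every point is a generalized Lebesgue point of
this representative. -/
theorem hajlasz_holder_representative
    (μ : Measure Z) (Q CZ s p : ℝ)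
    (hμ : IsMetricMeasure μ) (hQ : 0 < Q)
    (hZreg : IsAhlforsOn μ (Set.univ : Set Z) Q CZ)
    (hs0 : 0 < s) (hs1 : s ≤ 1) (hp : Q / s < p) :
    ∃ C : ℝ, 0 < C ∧ ∀ (f : Z → ℂ) (g : Z → ℝ),
      LocallyIntegrable f μ →
      IsHajlaszGrad s f g →
      lpNorm μ p g < ⊤ →
      ∃ ft : Z → ℂ, Continuous ft ∧ f =ᵐ[μ] ft ∧
        (∀ ξ η : Z, ‖ft ξ - ft η‖ ≤ C * dist ξ η ^ (s - Q / p) * (lpNorm μ p g).toReal) ∧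
        ∀ ξ : Z,
          Tendsto (fun r : ℝ => (μ (ball ξ r)).toReal⁻¹ * ∫ x in ball ξ r, ‖ft x - ft ξ‖ ∂μ)
            (nhdsWithin 0 (Ioi 0)) (nhds 0) := by
  obtain ⟨hCZ1, hAhl⟩ := hZreg
  have hCZ0 : (0:ℝ) < CZ := lt_of_lt_of_le one_pos hCZ1
  have hp0 : 0 < p := lt_trans (div_pos hQ hs0) hp
  have hα : 0 < s - Q / p := by
    have h1 : Q / p < s := by
      rw [div_lt_iff₀ hp0]
      calc Q = (Q / s) * s := by field_simp
      _ < p * s := mul_lt_mul_of_pos_right hp hs0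
      _ = s * p := mul_comm _ _
    linarith
  set α : ℝ := s - Q / p with hαdef
  set K : ℝ := (2 * CZ) ^ (1/p) with hKdef
  have hK0 : 0 < K := Real.rpow_pos_of_pos (by linarith) _
  set q : ℝ := (1/2 : ℝ) ^ α with hqdef
  have hq0 : 0 < q := Real.rpow_pos_of_pos (by norm_num) _
  have hq1 : q < 1 := Real.rpow_lt_one (by norm_num) (by norm_num) hα
  set K' : ℝ := 2 ^ s * (1 + 2 ^ (Q/p)) * K with hK'def
  have hK'0 : 0 < K' := by
    have h1 : (0:ℝ) < 2 ^ s := Real.rpow_pos_of_pos two_pos s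
    have h2 : (0:ℝ) < 2 ^ (Q/p) := Real.rpow_pos_of_pos two_pos _
    have : (0:ℝ) < 1 + 2 ^ (Q/p) := by linarith
    positivity
  set C : ℝ := 2 * (K' / (1 - q)) + 2 ^ s * 2 * 2 ^ (Q/p) * K with hCdef
  have hC0 : 0 < C := by
    have h1 : (0:ℝ) < 2 ^ s := Real.rpow_pos_of_pos two_pos s
    have h2 : (0:ℝ) < 2 ^ (Q/p) := Real.rpow_pos_of_pos two_pos _
    have h3 : (0:ℝ) < 1 - q := by linarith
    have h4 : (0:ℝ) < K' / (1 - q) := div_pos hK'0 h3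
    positivity
  clear_value α K q K' C
  refine ⟨C, hC0, ?_⟩
  intro f g hfloc hg hgp
  obtain ⟨hgm, hg0, hgineq⟩ := hg
  set N : ℝ := (lpNorm μ p g).toReal with hNdef
  have hN0 : 0 ≤ N := ENNReal.toReal_nonneg
  set I : ℝ≥0∞ := ∫⁻ x, ENNReal.ofReal (g x) ^ p ∂μ with hIdef
  have hlpI : lpNorm μ p g = I ^ (1/p) := by rw [hIdef]; rfl
  have hIfin : I ≠ ⊤ := by
    intro h
    rw [hlpI, h, ENNReal.top_rpow_of_pos (by positivity)] at hgp
    exact lt_irrefl _ hgp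
  have hIp : I ^ (1/p) = ENNReal.ofReal N := by
    rw [← hlpI, hNdef]
    exact (ENNReal.ofReal_toReal hgp.ne).symm
  clear_value N I
  -- good points: in any admissible ball there is a point where g is small
  have key : ∀ (ζ : Z) (r : ℝ), 0 < r → ENNReal.ofReal r < EMetric.diam (Set.univ : Set Z) →
      ∃ x, dist ζ x < r ∧ g x ≤ K * r ^ (-(Q/p)) * N := by
    intro ζ r hr hrd
    obtain ⟨hlow, -⟩ := hAhl ζ (mem_univ ζ) r hr hrd
    have hB0 : μ (ball ζ r) ≠ 0 := ((hμ ζ r hr).1).ne'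
    have hBfin : μ (ball ζ r) ≠ ⊤ := ((hμ ζ r hr).2).ne
    have hmeas : Measurable fun x => ENNReal.ofReal (g x) ^ p :=
      Measurable.pow_const (Measurable.ennreal_ofReal hgm) p
    obtain ⟨x, hxB, hx⟩ := exists_le_twice_avg hmeas hB0 hBfin hIfin
      (by rw [hIdef]; exact setLIntegral_le_lintegral _ _)
    refine ⟨x, mem_ball'.mp hxB, ?_⟩
    have hcr : (0:ℝ) < CZ⁻¹ * r ^ Q := mul_pos (inv_pos.mpr hCZ0) (Real.rpow_pos_of_pos hr Q)
    have h1 : (μ (ball ζ r))⁻¹ ≤ ENNReal.ofReal ((CZ⁻¹ * r ^ Q)⁻¹) := by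
      rw [ENNReal.ofReal_inv_of_pos hcr]
      exact ENNReal.inv_le_inv.mpr hlow
    have h2 : ENNReal.ofReal (g x) ^ p ≤ 2 * ENNReal.ofReal ((CZ⁻¹ * r ^ Q)⁻¹) * I :=
      le_trans hx (mul_le_mul' (mul_le_mul' le_rfl h1) le_rfl)
    have h3 : ENNReal.ofReal (g x) ≤ (2 * ENNReal.ofReal ((CZ⁻¹ * r ^ Q)⁻¹) * I) ^ (1/p) := by
      have h := ENNReal.rpow_le_rpow h2 (by positivity : (0:ℝ) ≤ 1/p)
      rwa [← ENNReal.rpow_mul, mul_one_div_cancel hp0.ne', ENNReal.rpow_one] at h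
    have hcr2 : (0:ℝ) < 2 * (CZ⁻¹ * r ^ Q)⁻¹ := mul_pos two_pos (inv_pos.mpr hcr)
    have h4 : ((2:ℝ≥0∞) * ENNReal.ofReal ((CZ⁻¹ * r ^ Q)⁻¹) * I) ^ (1/p)
        = ENNReal.ofReal ((2 * (CZ⁻¹ * r ^ Q)⁻¹) ^ (1/p)) * ENNReal.ofReal N := by
      rw [show (2:ℝ≥0∞) * ENNReal.ofReal ((CZ⁻¹ * r ^ Q)⁻¹)
            = ENNReal.ofReal (2 * (CZ⁻¹ * r ^ Q)⁻¹) by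
          rw [ENNReal.ofReal_mul (by norm_num : (0:ℝ) ≤ 2)]; norm_num,
        ENNReal.mul_rpow_of_nonneg _ _ (by positivity : (0:ℝ) ≤ 1/p),
        ENNReal.ofReal_rpow_of_pos hcr2, hIp]
    have h5 : (2 * (CZ⁻¹ * r ^ Q)⁻¹ : ℝ) ^ (1/p) = K * r ^ (-(Q/p)) := by
      have e1 : (2 * (CZ⁻¹ * r ^ Q)⁻¹ : ℝ) = (2 * CZ) * r ^ (-Q) := by
        rw [mul_inv, inv_inv, ← Real.rpow_neg hr.le]; ring
      rw [e1, Real.mul_rpow (by linarith : (0:ℝ) ≤ 2 * CZ) (Real.rpow_nonneg hr.le _),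
        ← hKdef, ← Real.rpow_mul hr.le]
      congr 1
      ring
    have h6 : ENNReal.ofReal (g x) ≤ ENNReal.ofReal (K * r ^ (-(Q/p)) * N) := by
      rw [ENNReal.ofReal_mul (mul_nonneg hK0.le (Real.rpow_nonneg hr.le _))]
      calc ENNReal.ofReal (g x) ≤ (2 * ENNReal.ofReal ((CZ⁻¹ * r ^ Q)⁻¹) * I) ^ (1/p) := h3
      _ = ENNReal.ofReal ((2 * (CZ⁻¹ * r ^ Q)⁻¹) ^ (1/p)) * ENNReal.ofReal N := h4
      _ = ENNReal.ofReal (K * r ^ (-(Q/p))) * ENNReal.ofReal N := by rw [h5]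
    exact (ENNReal.ofReal_le_ofReal_iff
      (mul_nonneg (mul_nonneg hK0.le (Real.rpow_nonneg hr.le _)) hN0)).mp h6
  -- the Hölder estimate for f itself
  have holder : ∀ ξ η : Z, ‖f ξ - f η‖ ≤ C * dist ξ η ^ α * N := by
    intro ξ η
    rcases eq_or_ne ξ η with rfl | hne
    · simp [dist_self, Real.zero_rpow hα.ne']
    · have hd : 0 < dist ξ η := dist_pos.mpr hne
      set d := dist ξ η with hddef
      clear_value d
      have hρ : 0 < d/2 := by linarith
      have hdiam : ENNReal.ofReal (d/2) < EMetric.diam (Set.univ : Set Z) := by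
        refine lt_of_lt_of_le ((ENNReal.ofReal_lt_ofReal_iff hd).mpr (by linarith)) ?_
        rw [hddef, ← edist_dist]
        exact EMetric.edist_le_diam_of_mem (mem_univ ξ) (mem_univ η)
      have chain : ∀ ζ : Z, ∃ x0 : Z, dist ζ x0 < d/2 ∧ g x0 ≤ K * (d/2) ^ (-(Q/p)) * N ∧
          ‖f ζ - f x0‖ ≤ K' / (1 - q) * ((d/2) ^ α * N) := by
        intro ζ
        set r : ℕ → ℝ := fun n => (d/2) * (1/2 : ℝ) ^ n with hrdef
        clear_value r
        have hrpos : ∀ n, 0 < r n := fun n => by rw [hrdef]; positivity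
        have hrle : ∀ n, r n ≤ d/2 := by
          intro n
          have h1 : (1/2:ℝ)^n ≤ 1 := pow_le_one₀ (by norm_num) (by norm_num)
          calc r n = (d/2) * (1/2:ℝ)^n := by rw [hrdef]
          _ ≤ (d/2) * 1 := by nlinarith
          _ = d/2 := mul_one _
        have hrdiam : ∀ n, ENNReal.ofReal (r n) < EMetric.diam (Set.univ : Set Z) :=
          fun n => lt_of_le_of_lt (ENNReal.ofReal_le_ofReal (hrle n)) hdiam
        choose x hx1 hx2 using fun n => key ζ (r n) (hrpos n) (hrdiam n)
        have hr_succ : ∀ n, r (n+1) = r n / 2 := by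
          intro n; simp only [hrdef, pow_succ]; ring
        have hsucc : ∀ n, (r (n+1)) ^ (-(Q/p)) = (r n) ^ (-(Q/p)) * 2 ^ (Q/p) := by
          intro n
          rw [hr_succ, Real.div_rpow (hrpos n).le (by norm_num : (0:ℝ) ≤ 2),
            Real.rpow_neg (by norm_num : (0:ℝ) ≤ 2), div_eq_mul_inv, inv_inv]
        have hmul : ∀ n, (r n) ^ s * (r n) ^ (-(Q/p)) = (r n) ^ α := by
          intro n
          have he : s + -(Q/p) = α := by rw [hαdef]; ring
          rw [← Real.rpow_add (hrpos n), he]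
        have hrα : ∀ n, (r n) ^ α = (d/2) ^ α * q ^ n := by
          intro n
          rw [hrdef]
          simp only
          rw [Real.mul_rpow hρ.le (by positivity), pow_rpow_comm (by norm_num) α n, ← hqdef]
        have step : ∀ n, ‖f (x n) - f (x (n+1))‖ ≤ K' * ((d/2) ^ α * N) * q ^ n := by
          intro n
          have hdist : dist (x n) (x (n+1)) ≤ 2 * r n := by
            have h1 := hx1 n
            have h2 := hx1 (n+1)
            have h3 : r (n+1) ≤ r n := by
              rw [hr_succ]; linarith [hrpos n]
            have h4 := dist_triangle (x n) ζ (x (n+1))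
            rw [dist_comm (x n) ζ] at h4
            linarith
          calc ‖f (x n) - f (x (n+1))‖ ≤ dist (x n) (x (n+1)) ^ s * (g (x n) + g (x (n+1))) :=
              hgineq _ _
          _ ≤ (2 * r n) ^ s * (g (x n) + g (x (n+1))) :=
              mul_le_mul_of_nonneg_right (Real.rpow_le_rpow dist_nonneg hdist hs0.le)
                (add_nonneg (hg0 _) (hg0 _))
          _ ≤ (2 * r n) ^ s * ((K * (r n) ^ (-(Q/p)) * N) + (K * (r (n+1)) ^ (-(Q/p)) * N)) :=
              mul_le_mul_of_nonneg_left (add_le_add (hx2 n) (hx2 (n+1)))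
                (Real.rpow_nonneg (by linarith [hrpos n]) s)
          _ = K' * ((r n) ^ s * (r n) ^ (-(Q/p))) * N := by
              rw [Real.mul_rpow (by norm_num : (0:ℝ) ≤ 2) (hrpos n).le, hsucc n, hK'def]
              ring
          _ = K' * ((d/2) ^ α * N) * q ^ n := by
              rw [hmul n, hrα n]; ring
        have tele : ∀ n, ‖f (x 0) - f (x n)‖
            ≤ K' * ((d/2) ^ α * N) * (∑ i ∈ Finset.range n, q ^ i) := by
          intro n
          induction n with
          | zero => simp
          | succ n ih =>
            calc ‖f (x 0) - f (x (n+1))‖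
                ≤ ‖f (x 0) - f (x n)‖ + ‖f (x n) - f (x (n+1))‖ := by
                  have := dist_triangle (f (x 0)) (f (x n)) (f (x (n+1)))
                  simpa [dist_eq_norm] using this
            _ ≤ K' * ((d/2) ^ α * N) * (∑ i ∈ Finset.range n, q ^ i)
                + K' * ((d/2) ^ α * N) * q ^ n := add_le_add ih (step n)
            _ = K' * ((d/2) ^ α * N) * (∑ i ∈ Finset.range (n+1), q ^ i) := by
                rw [Finset.sum_range_succ]; ring
        have hsum : ∀ n, (∑ i ∈ Finset.range n, q ^ i) ≤ 1/(1-q) := by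
          intro n
          rw [geom_sum_eq hq1.ne n]
          have he : (q^n - 1)/(q-1) = (1 - q^n)/(1-q) := by
            rw [← neg_div_neg_eq]; ring_nf
          rw [he, div_le_div_iff₀ (by linarith) (by linarith)]
          nlinarith [mul_nonneg (pow_nonneg hq0.le n) (by linarith : (0:ℝ) ≤ 1 - q)]
        have hconv : Tendsto (fun n => ‖f ζ - f (x n)‖) atTop (nhds 0) := by
          apply squeeze_zero (fun n => norm_nonneg _)
            (g := fun n => (r n) ^ s * g ζ + K * (r n) ^ α * N)
          · intro n
            calc ‖f ζ - f (x n)‖ ≤ dist ζ (x n) ^ s * (g ζ + g (x n)) := hgineq _ _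
            _ ≤ (r n) ^ s * (g ζ + g (x n)) :=
                mul_le_mul_of_nonneg_right
                  (Real.rpow_le_rpow dist_nonneg (hx1 n).le hs0.le)
                  (add_nonneg (hg0 _) (hg0 _))
            _ = (r n) ^ s * g ζ + (r n) ^ s * g (x n) := by ring
            _ ≤ (r n) ^ s * g ζ + (r n) ^ s * (K * (r n) ^ (-(Q/p)) * N) := by
                have := hx2 n
                nlinarith [Real.rpow_nonneg (hrpos n).le s, hx2 n]
            _ = (r n) ^ s * g ζ + K * ((r n) ^ s * (r n) ^ (-(Q/p))) * N := by ring
            _ = (r n) ^ s * g ζ + K * (r n) ^ α * N := by rw [hmul n]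
          · have t1 := rpow_seq_tendsto hρ hs0
            have t2 := rpow_seq_tendsto hρ hα
            have := (t1.mul_const (g ζ)).add ((t2.const_mul K).mul_const N)
            simp only [hrdef]
            simpa using this
        refine ⟨x 0, by simpa [hrdef] using hx1 0, by simpa [hrdef] using hx2 0, ?_⟩
        have hn : ∀ n, ‖f ζ - f (x 0)‖
            ≤ ‖f ζ - f (x n)‖ + K' * ((d/2) ^ α * N) * (1/(1-q)) := by
          intro n
          have htri : ‖f ζ - f (x 0)‖ ≤ ‖f ζ - f (x n)‖ + ‖f (x n) - f (x 0)‖ := by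
            have := dist_triangle (f ζ) (f (x n)) (f (x 0))
            simpa [dist_eq_norm] using this
          have h2 : ‖f (x n) - f (x 0)‖ ≤ K' * ((d/2) ^ α * N) * (1/(1-q)) := by
            rw [norm_sub_rev]
            refine le_trans (tele n) ?_
            have hnn : 0 ≤ K' * ((d/2) ^ α * N) :=
              mul_nonneg hK'0.le (mul_nonneg (Real.rpow_nonneg hρ.le _) hN0)
            exact mul_le_mul_of_nonneg_left (hsum n) hnn
          linarith
        have hlim : Tendsto (fun n => ‖f ζ - f (x n)‖ + K' * ((d/2) ^ α * N) * (1/(1-q)))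
            atTop (nhds (0 + K' * ((d/2) ^ α * N) * (1/(1-q)))) :=
          hconv.add_const _
        have hfin := ge_of_tendsto hlim (Filter.Eventually.of_forall hn)
        rw [zero_add] at hfin
        calc ‖f ζ - f (x 0)‖ ≤ K' * ((d/2) ^ α * N) * (1/(1-q)) := hfin
        _ = K' / (1 - q) * ((d/2) ^ α * N) := by ring
      obtain ⟨a, ha1, ha2, ha3⟩ := chain ξ
      obtain ⟨b, hb1, hb2, hb3⟩ := chain η
      have e2 : ((d/2:ℝ)) ^ (-(Q/p)) = d ^ (-(Q/p)) * 2 ^ (Q/p) := by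
        rw [Real.div_rpow hd.le (by norm_num : (0:ℝ) ≤ 2),
          Real.rpow_neg (by norm_num : (0:ℝ) ≤ 2), div_eq_mul_inv, inv_inv]
      have e3 : d ^ s * d ^ (-(Q/p)) = d ^ α := by
        have he : s + -(Q/p) = α := by rw [hαdef]; ring
        rw [← Real.rpow_add hd, he]
      have hmid : ‖f a - f b‖ ≤ 2 ^ s * 2 * 2 ^ (Q/p) * K * d ^ α * N := by
        have hdistab : dist a b ≤ 2 * d := by
          have h1 : dist a ξ < d/2 := by rw [dist_comm]; exact ha1
          have h2 : dist η b < d/2 := hb1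
          have t1 := dist_triangle a ξ b
          have t2 := dist_triangle ξ η b
          rw [← hddef] at t2
          linarith
        have hstep : ‖f a - f b‖ ≤ (2*d) ^ s * ((K * (d/2) ^ (-(Q/p)) * N)
            + (K * (d/2) ^ (-(Q/p)) * N)) := by
          calc ‖f a - f b‖ ≤ dist a b ^ s * (g a + g b) := hgineq _ _
          _ ≤ (2*d) ^ s * (g a + g b) :=
              mul_le_mul_of_nonneg_right (Real.rpow_le_rpow dist_nonneg hdistab hs0.le)
                (add_nonneg (hg0 _) (hg0 _))
          _ ≤ _ := mul_le_mul_of_nonneg_left (add_le_add ha2 hb2)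
                (Real.rpow_nonneg (by linarith) s)
        refine le_trans hstep (le_of_eq ?_)
        rw [Real.mul_rpow (by norm_num : (0:ℝ) ≤ 2) hd.le, e2]
        calc 2 ^ s * d ^ s * (K * (d ^ (-(Q/p)) * 2 ^ (Q/p)) * N
              + K * (d ^ (-(Q/p)) * 2 ^ (Q/p)) * N)
            = 2 ^ s * 2 * 2 ^ (Q/p) * K * (d ^ s * d ^ (-(Q/p))) * N := by ring
        _ = 2 ^ s * 2 * 2 ^ (Q/p) * K * d ^ α * N := by rw [e3]
      have hside : K' / (1 - q) * ((d/2) ^ α * N) ≤ K' / (1 - q) * (d ^ α * N) := by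
        have h1 : ((d/2:ℝ)) ^ α ≤ d ^ α :=
          Real.rpow_le_rpow hρ.le (by linarith) hα.le
        have h2 : (0:ℝ) ≤ K' / (1 - q) := (div_pos hK'0 (by linarith)).le
        have h3 : ((d/2:ℝ)) ^ α * N ≤ d ^ α * N := mul_le_mul_of_nonneg_right h1 hN0
        exact mul_le_mul_of_nonneg_left h3 h2
      have htri4 : ‖f ξ - f η‖ ≤ ‖f ξ - f a‖ + ‖f a - f b‖ + ‖f b - f η‖ := by
        have := dist_triangle4 (f ξ) (f a) (f b) (f η)
        simpa [dist_eq_norm] using this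
      have hb3' : ‖f b - f η‖ ≤ K' / (1 - q) * (d ^ α * N) := by
        rw [norm_sub_rev]; exact le_trans hb3 hside
      have ha3' : ‖f ξ - f a‖ ≤ K' / (1 - q) * (d ^ α * N) := le_trans ha3 hside
      have hCeq : C * d ^ α * N = K' / (1 - q) * (d ^ α * N)
          + 2 ^ s * 2 * 2 ^ (Q/p) * K * d ^ α * N + K' / (1 - q) * (d ^ α * N) := by
        rw [hCdef]; ring
      linarith
  -- continuity
  have hcont : Continuous f := by
    rw [Metric.continuous_iff]
    intro ξ ε hε
    have hM0 : 0 ≤ C * N := mul_nonneg hC0.le hN0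
    have hMp : 0 < C * N + 1 := by linarith
    have hbase : 0 < ε / (C * N + 1) := div_pos hε hMp
    refine ⟨(ε / (C * N + 1)) ^ α⁻¹, Real.rpow_pos_of_pos hbase _, fun x hx => ?_⟩
    have h1 : dist x ξ ^ α < ε / (C * N + 1) := by
      have h := Real.rpow_lt_rpow dist_nonneg hx hα
      rwa [← Real.rpow_mul hbase.le, inv_mul_cancel₀ hα.ne', Real.rpow_one] at h
    have h2 : dist (f x) (f ξ) ≤ C * N * (dist x ξ ^ α) := by
      rw [dist_eq_norm]
      calc ‖f x - f ξ‖ ≤ C * dist x ξ ^ α * N := holder x ξ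
      _ = C * N * (dist x ξ ^ α) := by ring
    calc dist (f x) (f ξ) ≤ C * N * (dist x ξ ^ α) := h2
    _ ≤ C * N * (ε / (C * N + 1)) := mul_le_mul_of_nonneg_left h1.le hM0
    _ < ε := by
        have hlt : C * N / (C * N + 1) < 1 := (div_lt_one hMp).mpr (by linarith)
        calc C * N * (ε / (C * N + 1)) = ε * (C * N / (C * N + 1)) := by ring
        _ < ε * 1 := mul_lt_mul_of_pos_left hlt hε
        _ = ε := mul_one ε
  refine ⟨f, hcont, Filter.EventuallyEq.rfl, holder, ?_⟩
  -- generalized Lebesgue points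
  intro ξ
  have hbound : ∀ r : ℝ, r ∈ Ioi (0:ℝ) →
      (μ (ball ξ r)).toReal⁻¹ * ∫ x in ball ξ r, ‖f x - f ξ‖ ∂μ ≤ C * N * r ^ α := by
    intro r hr
    rw [mem_Ioi] at hr
    have hBfin : μ (ball ξ r) < ⊤ := (hμ ξ r hr).2
    have hBpos : 0 < (μ (ball ξ r)).toReal := ENNReal.toReal_pos ((hμ ξ r hr).1).ne' hBfin.ne
    have hpt : ∀ x ∈ ball ξ r, ‖‖f x - f ξ‖‖ ≤ C * N * r ^ α := by
      intro x hx
      rw [norm_norm]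
      calc ‖f x - f ξ‖ ≤ C * dist x ξ ^ α * N := holder x ξ
      _ ≤ C * r ^ α * N := by
          have := Real.rpow_le_rpow dist_nonneg (le_of_lt (mem_ball.mp hx)) hα.le
          have h1 : C * dist x ξ ^ α ≤ C * r ^ α := mul_le_mul_of_nonneg_left this hC0.le
          exact mul_le_mul_of_nonneg_right h1 hN0
      _ = C * N * r ^ α := by ring
    have hmeas : AEStronglyMeasurable (fun x => ‖f x - f ξ‖) (μ.restrict (ball ξ r)) :=
      ((hcont.sub continuous_const).norm).aestronglyMeasurable
    have hint := norm_setIntegral_le_of_norm_le_const hBfin hpt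
    have h0int : 0 ≤ ∫ x in ball ξ r, ‖f x - f ξ‖ ∂μ :=
      integral_nonneg fun x => norm_nonneg _
    have hint' : ∫ x in ball ξ r, ‖f x - f ξ‖ ∂μ ≤ C * N * r ^ α * (μ (ball ξ r)).toReal :=
      le_trans (le_abs_self _) (by simpa [Real.norm_eq_abs, Measure.real] using hint)
    calc (μ (ball ξ r)).toReal⁻¹ * ∫ x in ball ξ r, ‖f x - f ξ‖ ∂μ
        ≤ (μ (ball ξ r)).toReal⁻¹ * (C * N * r ^ α * (μ (ball ξ r)).toReal) :=
          mul_le_mul_of_nonneg_left hint' (inv_nonneg.mpr ENNReal.toReal_nonneg)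
    _ = C * N * r ^ α := by field_simp
  have hrt : Tendsto (fun r : ℝ => C * N * r ^ α) (nhdsWithin 0 (Ioi 0)) (nhds 0) := by
    have hcontat : ContinuousAt (fun t : ℝ => t ^ α) 0 :=
      Real.continuousAt_rpow_const 0 α (Or.inr hα.le)
    have h1 : Tendsto (fun t : ℝ => t ^ α) (nhdsWithin 0 (Ioi 0)) (nhds 0) := by
      have h2 := hcontat.tendsto
      rw [Real.zero_rpow hα.ne'] at h2
      exact h2.mono_left nhdsWithin_le_nhds
    simpa using h1.const_mul (C * N)
  refine squeeze_zero' ?_ ?_ hrt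
  · filter_upwards [self_mem_nhdsWithin] with r hr
    rw [mem_Ioi] at hr
    exact mul_nonneg (inv_nonneg.mpr ENNReal.toReal_nonneg)
      (integral_nonneg fun x => norm_nonneg _)
  · filter_upwards [self_mem_nhdsWithin] with r hr
    exact hbound r hr
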